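/- For every nonnegative integer n, ∑_{k=0}^{2n} (-1)^k k·S(n,k) equals 0 if n is odd or n = 0, and equals n if n is even and positive. -/

import Mathlib

open Finset

/-- Trinomial coefficient: coefficient of x^i in (1+x+x^2)^n, zero for i<0 (and automatically zero for i>2n). -/
def T (n : ℕ) (i : ℤ) : ℕ :=
  if 0 ≤ i then ∑ j ∈ Finset.range (i.toNat + 1), n.choose j * j.choose (i.toNat - j) else 0

/-- Partial sum trinomial coefficient. -/
def S (n : ℕ) (k : ℤ) : ℕ :=
  ∑ j ∈ Finset.range (n + 1), T (n - j) (k - j)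

lemma T_neg {n : ℕ} {i : ℤ} (h : i < 0) : T n i = 0 := by
  simp [T, not_le.2 h]

lemma T_nat (n k : ℕ) : T n (k : ℤ) = ∑ j ∈ range (k + 1), n.choose j * j.choose (k - j) := by
  simp [T]

lemma T_big {n : ℕ} {i : ℤ} (h : 2 * n < i) : T n i = 0 := by
  have h0 : (0:ℤ) ≤ i := by omega
  have hk : 2 * n < i.toNat := by omega
  simp only [T, if_pos h0]
  apply Finset.sum_eq_zero
  intro j hj
  rcases le_or_gt j n with hj' | hj'
  · have : j < i.toNat - j := by omega
    simp [Nat.choose_eq_zero_of_lt this]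
  · simp [Nat.choose_eq_zero_of_lt hj']

lemma alt_choose (j N : ℕ) (h : j ≤ N) :
    ∑ l ∈ range (N + 1), (-1 : ℤ) ^ l * j.choose l = if j = 0 then 1 else 0 := by
  rw [← Int.alternating_sum_range_choose (n := j)]
  rw [← Finset.sum_range_add_sum_Ico _ (by omega : j + 1 ≤ N + 1)]
  have : ∑ l ∈ Ico (j+1) (N+1), (-1:ℤ)^l * j.choose l = 0 := by
    apply Finset.sum_eq_zero
    intro l hl
    simp only [mem_Ico] at hl
    simp [Nat.choose_eq_zero_of_lt (by omega : j < l)]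
  rw [this, add_zero]

lemma alt_choose_mul (j N : ℕ) (h : j ≤ N) :
    ∑ l ∈ range (N + 1), (-1 : ℤ) ^ l * l * j.choose l = if j = 1 then -1 else 0 := by
  match j with
  | 0 =>
    simp only [if_neg (by omega : (0:ℕ) ≠ 1)]
    apply Finset.sum_eq_zero
    intro l hl
    rcases Nat.eq_zero_or_pos l with rfl | hl'
    · simp
    · simp [Nat.choose_eq_zero_of_lt hl']
  | m + 1 =>
    rw [Finset.sum_range_succ' (fun l => (-1:ℤ)^l * l * (m+1).choose l)]
    have key : ∀ l : ℕ, (-1:ℤ)^(l+1) * ((l:ℤ)+1) * ((m+1).choose (l+1) : ℤ)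
        = -((m:ℤ)+1) * ((-1:ℤ)^l * m.choose l) := by
      intro l
      have := Nat.add_one_mul_choose_eq m l
      have : ((m+1) * m.choose l : ℤ) = (m+1).choose (l+1) * (l+1) := by exact_mod_cast this
      rw [pow_succ]
      linear_combination ((-1:ℤ)^l) * this
    push_cast
    simp only [key]
    rw [← Finset.mul_sum]
    have hN : m ≤ N - 1 := by omega
    have hNr : N - 1 + 1 = N := by omega
    rw [show range N = range ((N-1)+1) by rw [hNr], alt_choose m (N-1) hN]
    rcases Nat.eq_zero_or_pos m with rfl | hm
    · norm_num
    · rw [if_neg (by omega), if_neg (by omega)]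
      simp

lemma alt_T (m N : ℕ) (h : 2 * m ≤ N) :
    ∑ k ∈ range (N + 1), (-1 : ℤ) ^ k * T m k = 1 := by
  have expand : ∀ k ∈ range (N+1), (-1:ℤ)^k * T m k
      = ∑ j ∈ range (k+1), (-1:ℤ)^k * (m.choose j * j.choose (k-j) : ℕ) := by
    intro k _
    rw [T_nat, ← Finset.mul_sum]
    push_cast
    ring
  rw [Finset.sum_congr rfl expand]
  have comm := Finset.sum_Ico_Ico_comm 0 (N+1)
      (fun j k => (-1:ℤ)^k * (m.choose j * j.choose (k-j) : ℕ))
  simp only [← Finset.range_eq_Ico] at comm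
  rw [comm.symm]
  have inner : ∀ j ∈ range (N+1),
      (∑ k ∈ Ico j (N+1), (-1:ℤ)^k * (m.choose j * j.choose (k-j) : ℕ))
      = if j = 0 then 1 else 0 := by
    intro j hj
    simp only [mem_range] at hj
    rw [Finset.sum_Ico_eq_sum_range]
    simp only [Nat.add_sub_cancel_left, show N + 1 - j = (N - j) + 1 by omega]
    have reidx : ∀ l, (-1:ℤ)^(j+l) * (m.choose j * j.choose l : ℕ)
        = ((-1:ℤ)^j * m.choose j) * ((-1:ℤ)^l * j.choose l) := by
      intro l
      rw [pow_add]
      push_cast; ring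
    rw [Finset.sum_congr rfl (fun l _ => reidx l), ← Finset.mul_sum]
    rcases le_or_gt j m with hjm | hjm
    · rw [alt_choose j (N - j) (by omega)]
      rcases Nat.eq_zero_or_pos j with rfl | hj0
      · simp
      · rw [if_neg (by omega : ¬ j = 0)]; ring
    · simp [Nat.choose_eq_zero_of_lt hjm, if_neg (by omega : ¬ j = 0)]
  rw [Finset.sum_congr rfl inner]
  simp

lemma alt_T_mul (m N : ℕ) (h : 2 * m ≤ N) :
    ∑ k ∈ range (N + 1), (-1 : ℤ) ^ k * k * T m k = m := by
  have expand : ∀ k ∈ range (N+1), (-1:ℤ)^k * k * T m k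
      = ∑ j ∈ range (k+1), (-1:ℤ)^k * k * (m.choose j * j.choose (k-j) : ℕ) := by
    intro k _
    rw [T_nat, ← Finset.mul_sum]
    push_cast
    ring
  rw [Finset.sum_congr rfl expand]
  have comm := Finset.sum_Ico_Ico_comm 0 (N+1)
      (fun j k => (-1:ℤ)^k * k * (m.choose j * j.choose (k-j) : ℕ))
  simp only [← Finset.range_eq_Ico] at comm
  rw [comm.symm]
  have inner : ∀ j ∈ range (N+1),
      (∑ k ∈ Ico j (N+1), (-1:ℤ)^k * k * (m.choose j * j.choose (k-j) : ℕ))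
      = if j = 1 then (m:ℤ) else 0 := by
    intro j hj
    simp only [mem_range] at hj
    rw [Finset.sum_Ico_eq_sum_range]
    simp only [Nat.add_sub_cancel_left, show N + 1 - j = (N - j) + 1 by omega]
    have reidx : ∀ l, (-1:ℤ)^(j+l) * ((j:ℤ)+l) * (m.choose j * j.choose l : ℕ)
        = ((-1:ℤ)^j * m.choose j) * ((j:ℤ) * ((-1:ℤ)^l * j.choose l) + (-1:ℤ)^l * l * j.choose l) := by
      intro l
      rw [pow_add]
      push_cast; ring
    calc ∑ l ∈ range (N - j + 1), (-1:ℤ)^(j+l) * ((j:ℤ)+l) * (m.choose j * j.choose l : ℕ)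
        = ((-1:ℤ)^j * m.choose j) * ((j:ℤ) * (∑ l ∈ range (N-j+1), (-1:ℤ)^l * j.choose l)
            + ∑ l ∈ range (N-j+1), (-1:ℤ)^l * l * j.choose l) := by
          rw [Finset.sum_congr rfl (fun l _ => reidx l), ← Finset.mul_sum, Finset.sum_add_distrib,
            ← Finset.mul_sum]
      _ = if j = 1 then (m:ℤ) else 0 := by
          rcases le_or_gt j m with hjm | hjm
          · rw [alt_choose j (N - j) (by omega), alt_choose_mul j (N - j) (by omega)]
            rcases Nat.eq_zero_or_pos j with rfl | hj0
            · simp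
            · rcases Nat.lt_or_ge j 2 with hj1 | hj1
              · have : j = 1 := by omega
                subst this
                simp
              · rw [if_neg (by omega), if_neg (by omega), if_neg (by omega : ¬ j = 1)]
                simp
          · have h1 : ¬ j = 1 ∨ m = 0 := by omega
            rcases Nat.eq_zero_or_pos m with rfl | hm
            · simp [Nat.choose_eq_zero_of_lt hjm]
            · simp [Nat.choose_eq_zero_of_lt hjm, if_neg (by omega : ¬ j = 1)]
  rw [Finset.sum_congr rfl inner, Finset.sum_ite_eq' (range (N+1)) 1 (fun _ => (m:ℤ))]
  rcases Nat.eq_zero_or_pos N with rfl | hN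
  · have : m = 0 := by omega
    subst this; simp
  · rw [if_pos (by simp [mem_range]; omega)]

lemma S_neg {n : ℕ} {k : ℤ} (h : k < 0) : S n k = 0 := by
  apply Finset.sum_eq_zero
  intro j _
  exact T_neg (by omega)

lemma S_big {n : ℕ} {k : ℤ} (h : 2 * n < k) : S n k = 0 := by
  apply Finset.sum_eq_zero
  intro j hj
  simp only [mem_range] at hj
  exact T_big (by push_cast; omega)

lemma S_rec (m : ℕ) (k : ℤ) : S (m + 1) k = S m (k - 1) + T (m + 1) k := by
  unfold S
  rw [Finset.sum_range_succ' (fun j => T (m + 1 - j) (k - j))]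
  congr 1
  · apply Finset.sum_congr rfl
    intro j _
    congr 1
    · omega
    · push_cast; ring
  · simp

lemma alt_S (m : ℕ) :
    ∑ k ∈ range (2 * m + 1), (-1 : ℤ) ^ k * S m k = if Even m then 1 else 0 := by
  induction m with
  | zero => simp [S, T]
  | succ m ih =>
    have e1 : ∀ k ∈ range (2 * (m+1) + 1), (-1:ℤ)^k * S (m+1) k
        = (-1:ℤ)^k * T (m+1) k + (-1:ℤ)^k * S m ((k:ℤ) - 1) := by
      intro k _
      rw [S_rec]
      push_cast
      ring
    rw [Finset.sum_congr rfl e1, Finset.sum_add_distrib]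
    have e2 : ∑ k ∈ range (2 * (m+1) + 1), (-1:ℤ)^k * T (m+1) k = 1 := by
      have := alt_T (m+1) (2*(m+1)) (le_refl _)
      convert this using 2
    have step : ∀ l : ℕ, (-1:ℤ)^(l+1) * (S m ((((l+1):ℕ):ℤ) - 1) : ℤ)
        = -((-1:ℤ)^l * (S m (l:ℤ) : ℤ)) := by
      intro l
      have harg : (((l+1):ℕ):ℤ) - 1 = (l:ℤ) := by push_cast; ring
      rw [harg, pow_succ]; ring
    have e3 : ∑ k ∈ range (2 * (m+1) + 1), (-1:ℤ)^k * S m ((k:ℤ) - 1)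
        = - ∑ k ∈ range (2 * m + 1), (-1:ℤ)^k * S m k := by
      rw [Finset.sum_range_succ' (fun k => (-1:ℤ)^k * S m ((k:ℤ) - 1))]
      have h0 : (-1:ℤ)^(0:ℕ) * (S m (((0:ℕ):ℤ) - 1) : ℤ) = 0 := by
        rw [S_neg (by norm_num)]; simp
      rw [h0, add_zero, Finset.sum_congr rfl (fun l _ => step l), Finset.sum_neg_distrib,
        show 2*(m+1) = (2*m+1)+1 by ring, Finset.sum_range_succ]
      have htop : (S m (((2*m+1 : ℕ)):ℤ) : ℤ) = 0 := by
        rw [S_big (by push_cast; omega)]; simp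
      rw [htop]
      ring
    rw [e2, e3, ih]
    rcases Nat.even_or_odd m with hm | hm
    · rw [if_pos hm, if_neg (by simp [Nat.even_add_one, hm])]
      ring
    · rw [if_neg (by simp [Nat.not_even_iff_odd.symm.1 hm]), if_pos (by simp [Nat.even_add_one, Nat.not_even_iff_odd.symm.1 hm])]
      ring

theorem partial_sum_alt_weighted_sum (n : ℕ) :
    ∑ k ∈ Finset.range (2 * n + 1), (-1 : ℤ) ^ k * k * S n k =
      if Odd n ∨ n = 0 then 0 else n := by
  induction n with
  | zero => simp
  | succ n ih =>
    have e1 : ∀ k ∈ range (2 * (n+1) + 1), (-1:ℤ)^k * k * S (n+1) k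
        = (-1:ℤ)^k * k * T (n+1) k + (-1:ℤ)^k * k * S n ((k:ℤ) - 1) := by
      intro k _
      rw [S_rec]
      push_cast
      ring
    rw [Finset.sum_congr rfl e1, Finset.sum_add_distrib]
    have e2 : ∑ k ∈ range (2 * (n+1) + 1), (-1:ℤ)^k * k * T (n+1) k = ((n:ℤ)+1) := by
      have := alt_T_mul (n+1) (2*(n+1)) (le_refl _)
      push_cast at this
      convert this using 2
    have step : ∀ l : ℕ, (-1:ℤ)^(l+1) * ((l:ℤ)+1) * (S n ((((l+1):ℕ):ℤ) - 1) : ℤ)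
        = -((-1:ℤ)^l * (l:ℤ) * (S n (l:ℤ) : ℤ) + (-1:ℤ)^l * (S n (l:ℤ) : ℤ)) := by
      intro l
      have harg : (((l+1):ℕ):ℤ) - 1 = (l:ℤ) := by push_cast; ring
      rw [harg, pow_succ]; ring
    have e3 : ∑ k ∈ range (2 * (n+1) + 1), (-1:ℤ)^k * k * S n ((k:ℤ) - 1)
        = -((∑ k ∈ range (2 * n + 1), (-1:ℤ)^k * k * S n k)
            + ∑ k ∈ range (2 * n + 1), (-1:ℤ)^k * S n k) := by
      rw [Finset.sum_range_succ' (fun k => (-1:ℤ)^k * k * S n ((k:ℤ) - 1))]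
      have h0 : (-1:ℤ)^(0:ℕ) * ((0:ℕ):ℤ) * (S n (((0:ℕ):ℤ) - 1) : ℤ) = 0 := by
        rw [S_neg (by norm_num)]; simp
      have eterm : ∀ l ∈ range (2*(n+1)), (-1:ℤ)^(l+1) * (((l+1:ℕ)):ℤ) * (S n ((((l+1):ℕ):ℤ) - 1) : ℤ)
          = -((-1:ℤ)^l * (l:ℤ) * (S n (l:ℤ) : ℤ) + (-1:ℤ)^l * (S n (l:ℤ) : ℤ)) := by
        intro l _
        rw [← step l]
        push_cast
        ring
      rw [h0, add_zero, Finset.sum_congr rfl eterm, Finset.sum_neg_distrib,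
        show 2*(n+1) = (2*n+1)+1 by ring, Finset.sum_range_succ]
      have htop : (S n (((2*n+1 : ℕ)):ℤ) : ℤ) = 0 := by
        rw [S_big (by push_cast; omega)]; simp
      rw [htop, Finset.sum_add_distrib]
      ring
    rw [e2, e3, ih, alt_S n]
    rcases Nat.even_or_odd n with hn | hn
    · have h1 : ¬ Odd n := Nat.not_odd_iff_even.2 hn
      have h2 : Odd (n+1) := Even.add_one hn
      rw [if_pos hn, if_pos (Or.inl h2)]
      have hv : (if Odd n ∨ n = 0 then (0:ℕ) else n) = n := by
        rcases eq_or_ne n 0 with rfl | hne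
        · simp
        · rw [if_neg (by push_neg; exact ⟨h1, hne⟩)]
      rw [hv]
      push_cast; ring
    · rw [if_pos (Or.inl hn), if_neg (Nat.not_even_iff_odd.2 hn),
        if_neg (by push_neg; exact ⟨Nat.not_odd_iff_even.2 hn.add_one, by omega⟩)]
      push_cast; ring
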